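/- Let G = F_n ⋊_α B_n be the semidirect product of the free group F_n by the braid group B_n via Artin's representation α (assume n ≥ 3 and that α is injective). For g ∈ G, the set C_{F_n}(g) = {xgx^{-1} : x ∈ F_n} is finite if and only if g lies in the center of G, which is the infinite cyclic group generated by (x_1⋯x_n)·z, where z = (s_1⋯s_{n−1})^n generates Z(B_n). -/

import Mathlib

/-- The braid relations on `m` generators `s_0, …, s_{m-1}`. -/
def braidRels (m : ℕ) : Set (FreeGroup (Fin m)) :=
  { r | (∃ i j : Fin m, (i : ℕ) + 1 = (j : ℕ) ∧
          r = FreeGroup.of i * FreeGroup.of j * FreeGroup.of i *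
              (FreeGroup.of j * FreeGroup.of i * FreeGroup.of j)⁻¹) ∨
        (∃ i j : Fin m, (i : ℕ) + 2 ≤ (j : ℕ) ∧
          r = FreeGroup.of i * FreeGroup.of j * (FreeGroup.of j * FreeGroup.of i)⁻¹) }

/-- The braid group `B_n` on `n` strands, with `n - 1` generators. -/
abbrev BraidGroup (n : ℕ) := PresentedGroup (braidRels (n - 1))

/-- The standard generators of the braid group. -/
def braidGen {n : ℕ} (i : Fin (n - 1)) : BraidGroup n := PresentedGroup.of i

def finInc {n : ℕ} (i : Fin (n - 1)) : Fin n := ⟨(i : ℕ), by omega⟩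

def finSucc' {n : ℕ} (i : Fin (n - 1)) : Fin n := ⟨(i : ℕ) + 1, by omega⟩

/-- `α : B_n → Aut(F_n)` is Artin's representation if it acts on the generators in
the prescribed way: `α(s_i)(x_i) = x_{i+1}`, `α(s_i)(x_{i+1}) = x_{i+1}⁻¹ x_i x_{i+1}`,
and `α(s_i)(x_j) = x_j` otherwise. -/
def IsArtinRep {n : ℕ} (α : BraidGroup n →* MulAut (FreeGroup (Fin n))) : Prop :=
  ∀ (i : Fin (n - 1)) (j : Fin n),
    α (braidGen i) (FreeGroup.of j) =
      if (j : ℕ) = (i : ℕ) then FreeGroup.of (finSucc' i)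
      else if (j : ℕ) = (i : ℕ) + 1 then
        (FreeGroup.of (finSucc' i))⁻¹ * FreeGroup.of (finInc i) * FreeGroup.of (finSucc' i)
      else FreeGroup.of j

/-- The element `x_1 x_2 ⋯ x_n` of the free group `F_n`. -/
def fullWord (n : ℕ) : FreeGroup (Fin n) :=
  (List.ofFn (fun j : Fin n => FreeGroup.of j)).prod

/-- The central element `z = (s_1 ⋯ s_{n-1})^n` of the braid group `B_n`. -/
def braidZ (n : ℕ) : BraidGroup n :=
  ((List.ofFn (fun i : Fin (n - 1) => braidGen i)).prod) ^ n


namespace BraidCenterProof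

open List

variable {A : Type*} [DecidableEq A]

/-- local reducedness relation -/
def NR (p q : A × Bool) : Prop := ¬(p.1 = q.1 ∧ p.2 = !q.2)

lemma chain_reduce {L : List (A × Bool)} (h : L.Chain' NR) : FreeGroup.reduce L = L := by
  induction L with
  | nil => rfl
  | cons x t ih =>
    have ht : FreeGroup.reduce t = t := ih h.tail
    rw [FreeGroup.reduce.cons, ht]
    cases t with
    | nil => rfl
    | cons y t' =>
      have : ¬(x.1 = y.1 ∧ x.2 = !y.2) := (List.isChain_cons_cons.mp h).1
      simp [this]

lemma reduced_cons {x : A × Bool} {t : List (A × Bool)}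
    (h : FreeGroup.reduce (x :: t) = x :: t) : FreeGroup.reduce t = t := by
  rw [FreeGroup.reduce.cons] at h
  cases r : FreeGroup.reduce t with
  | nil => rw [r] at h; simpa using (List.cons.injEq _ _ _ _ ▸ h).2.symm ▸ rfl
  | cons hd tl =>
    rw [r] at h
    by_cases hc : x.1 = hd.1 ∧ x.2 = !hd.2
    · simp only [hc, if_true] at h
      have h1 : FreeGroup.Red t (hd :: tl) := r ▸ FreeGroup.reduce.red
      have h2 := FreeGroup.Red.length_le h1
      subst h
      simp at h2
    · simp only [hc, if_false] at h
      injection h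

lemma reduced_chain {L : List (A × Bool)} (h : FreeGroup.reduce L = L) : L.Chain' NR := by
  induction L with
  | nil => exact List.isChain_nil
  | cons x t ih =>
    have ht := reduced_cons h
    refine List.isChain_cons.mpr ⟨?_, ih ht⟩
    intro y hy
    cases t with
    | nil => simp at hy
    | cons z t' =>
      simp only [List.head?_cons, Option.mem_def, Option.some.injEq] at hy
      subst hy
      rw [FreeGroup.reduce.cons, ht] at h
      have h' : (if x.1 = z.1 ∧ x.2 = !z.2 then t' else x :: z :: t') = x :: z :: t' := h
      by_cases hc : x.1 = z.1 ∧ x.2 = !z.2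
      · rw [if_pos hc] at h'
        have hlen := congrArg List.length h'
        simp at hlen
        omega
      · exact hc


lemma strip {u : FreeGroup A} {c : A} {b : Bool} {t : List (A × Bool)}
    (h : u.toWord = (c, b) :: t) :
    (FreeGroup.mk t).toWord = t ∧ u = (cond b (FreeGroup.of c) (FreeGroup.of c)⁻¹) * FreeGroup.mk t := by
  have hr : FreeGroup.reduce ((c, b) :: t) = (c, b) :: t := by
    rw [← h]; exact FreeGroup.reduce_toWord u
  have ht : FreeGroup.reduce t = t := reduced_cons hr
  refine ⟨by rw [FreeGroup.toWord_mk, ht], ?_⟩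
  have hu : u = FreeGroup.mk ((c, b) :: t) := by rw [← h, FreeGroup.mk_toWord]
  rw [hu]
  have hsplit : ((c, b) :: t) = [(c, b)] ++ t := rfl
  rw [hsplit, ← FreeGroup.mul_mk]
  congr 1
  cases b
  · show FreeGroup.mk [(c, false)] = (FreeGroup.of c)⁻¹
    rw [show (FreeGroup.of c) = FreeGroup.mk [(c, true)] from rfl, FreeGroup.inv_mk]
    simp [FreeGroup.invRev]
  · rfl

lemma no_middle {a : A} {M : ℕ} (hM : 0 < M) {u : FreeGroup A} (hu : u.toWord ≠ [])
    (h1 : ∀ p ∈ u.toWord.head?, p.1 ≠ a) (h2 : ∀ p ∈ u.toWord.getLast?, p.1 ≠ a)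
    (hcom : Commute u (FreeGroup.of a ^ M)) : False := by
  have key : u * FreeGroup.of a ^ M * u⁻¹ = FreeGroup.of a ^ M := by
    rw [hcom.eq]; group
  set L := u.toWord with hLdef
  have hL : FreeGroup.reduce L = L := FreeGroup.reduce_toWord u
  have hmkL : FreeGroup.mk L = u := FreeGroup.mk_toWord
  have hpow : FreeGroup.of a ^ M = FreeGroup.mk (List.replicate M (a, true)) := by
    rw [← FreeGroup.toWord_of_pow a M, FreeGroup.mk_toWord]
  have big : u * FreeGroup.of a ^ M * u⁻¹
      = FreeGroup.mk (L ++ List.replicate M (a, true) ++ FreeGroup.invRev L) := by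
    rw [← hmkL, hpow, FreeGroup.inv_mk, FreeGroup.mul_mk, FreeGroup.mul_mk]
  -- the big word is reduced
  have cL : L.Chain' NR := reduced_chain hL
  have crep : (List.replicate M (a, true)).Chain' NR :=
    reduced_chain (FreeGroup.reduce_replicate M (a, true))
  have cinv : (FreeGroup.invRev L).Chain' NR := by
    apply reduced_chain
    rw [FreeGroup.reduce_invRev, hL]
  have hlastrep : (List.replicate M (a, true)).getLast? = some (a, true) := by
    rw [List.getLast?_replicate, if_neg (by omega)]
  have hheadrep : (List.replicate M (a, true)).head? = some (a, true) := by
    rw [List.head?_replicate, if_neg (by omega)]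
  have hheadinv : ∀ q ∈ (FreeGroup.invRev L).head?, q.1 ≠ a := by
    intro q hq
    rw [FreeGroup.invRev, List.head?_reverse, List.getLast?_map] at hq
    rw [Option.mem_def, Option.map_eq_some_iff] at hq
    rcases hq with ⟨p, hp, rfl⟩
    exact h2 p hp
  have chain : (L ++ List.replicate M (a, true) ++ FreeGroup.invRev L).Chain' NR := by
    show List.IsChain NR _
    rw [List.isChain_append]
    refine ⟨List.isChain_append.mpr ⟨cL, crep, ?_⟩, cinv, ?_⟩
    · intro x hx y hy
      rw [hheadrep] at hy
      cases hy
      exact fun hcc => h2 x hx hcc.1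
    · intro x hx y hy
      rw [List.getLast?_append_of_ne_nil, hlastrep] at hx
      · cases hx
        exact fun hcc => (hheadinv y hy) (hcc.1 ▸ rfl)
      · cases M with
        | zero => omega
        | succ m => simp
  have tw := congrArg FreeGroup.toWord key
  rw [big, FreeGroup.toWord_mk, chain_reduce chain] at tw
  have hlen := congrArg List.length tw
  simp [FreeGroup.invRev] at hlen
  exact hu (List.length_eq_zero_iff.mp (by omega))


lemma comm_pow_gen_aux {a : A} {M : ℕ} (hM : 0 < M) :
    ∀ (N : ℕ) (u : FreeGroup A), u.toWord.length ≤ N →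
      Commute u (FreeGroup.of a ^ M) → ∃ k : ℤ, u = FreeGroup.of a ^ k := by
  intro N
  induction N with
  | zero =>
    intro u hl _
    refine ⟨0, ?_⟩
    have : u.toWord = [] := List.length_eq_zero_iff.mp (by omega)
    rw [FreeGroup.toWord_eq_nil_iff.mp this, zpow_zero]
  | succ N ih =>
    intro u hl hcom
    cases hL : u.toWord with
    | nil =>
      exact ⟨0, by rw [FreeGroup.toWord_eq_nil_iff.mp hL, zpow_zero]⟩
    | cons cb t =>
      obtain ⟨c, b⟩ := cb
      have hcomm_a : Commute (FreeGroup.of a) (FreeGroup.of a ^ M) :=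
        (Commute.refl _).pow_right M
      by_cases hca : c = a
      · -- strip on the left
        subst hca
        obtain ⟨ht, hu⟩ := strip hL
        set x := cond b (FreeGroup.of c) (FreeGroup.of c)⁻¹ with hx
        have hxc : Commute x (FreeGroup.of c ^ M) := by
          cases b
          · exact hcomm_a.inv_left
          · exact hcomm_a
        have hu' : FreeGroup.mk t = x⁻¹ * u := by rw [hu]; group
        have hcom' : Commute (FreeGroup.mk t) (FreeGroup.of c ^ M) := by
          rw [hu']; exact hxc.inv_left.mul_left hcom
        have hlt : (FreeGroup.mk t).toWord.length ≤ N := by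
          rw [ht]
          have := congrArg List.length hL
          simp at this; omega
        obtain ⟨k, hk⟩ := ih (FreeGroup.mk t) hlt hcom'
        rw [hk] at hu
        cases b
        · refine ⟨k - 1, ?_⟩
          rw [hu, hx]
          simp only [cond_false]
          group
        · refine ⟨k + 1, ?_⟩
          rw [hu, hx]
          simp only [cond_true]
          group
      · -- head is not an a-letter
        cases hlast : u.toWord.getLast? with
        | none =>
          rw [hL] at hlast; simp at hlast
        | some p =>
          obtain ⟨pa, pb⟩ := p
          by_cases hpa : pa = a
          · -- strip u⁻¹ on the left
            subst hpa
            have hinvW : u⁻¹.toWord = FreeGroup.invRev u.toWord := FreeGroup.toWord_inv u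
            have hhead : u⁻¹.toWord.head? = some (pa, !pb) := by
              rw [hinvW, FreeGroup.invRev, List.head?_reverse, List.getLast?_map, hlast,
                Option.map_some]
            obtain ⟨t₂, ht₂⟩ : ∃ t₂, u⁻¹.toWord = (pa, !pb) :: t₂ := by
              cases h2 : u⁻¹.toWord with
              | nil => rw [h2] at hhead; simp at hhead
              | cons q t₂ =>
                rw [h2] at hhead; simp at hhead
                exact ⟨t₂, by rw [← hhead]⟩
            obtain ⟨ht, hu⟩ := strip ht₂
            have hxc : Commute (cond (!pb) (FreeGroup.of pa) (FreeGroup.of pa)⁻¹)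
                (FreeGroup.of pa ^ M) := by
              cases pb
              · exact hcomm_a
              · exact hcomm_a.inv_left
            have hu' : FreeGroup.mk t₂
                = (cond (!pb) (FreeGroup.of pa) (FreeGroup.of pa)⁻¹)⁻¹ * u⁻¹ := by
              rw [hu]; group
            have hcom' : Commute (FreeGroup.mk t₂) (FreeGroup.of pa ^ M) := by
              rw [hu']; exact hxc.inv_left.mul_left hcom.inv_left
            have hlt : (FreeGroup.mk t₂).toWord.length ≤ N := by
              rw [ht]
              have h3 := congrArg List.length ht₂
              rw [hinvW, FreeGroup.invRev] at h3
              simp at h3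
              have h4 := congrArg List.length hL
              simp at h4
              omega
            obtain ⟨k, hk⟩ := ih (FreeGroup.mk t₂) hlt hcom'
            rw [hk] at hu
            have hufin : u = (cond (!pb) (FreeGroup.of pa) (FreeGroup.of pa)⁻¹
                * FreeGroup.of pa ^ k)⁻¹ := by
              rw [← hu, inv_inv]
            cases pb
            · refine ⟨-k - 1, ?_⟩
              rw [hufin]
              simp only [Bool.not_false, cond_true]
              group
            · refine ⟨-k + 1, ?_⟩
              rw [hufin]
              simp only [Bool.not_true, cond_false]
              group
          · -- contradiction via no_middle
            exfalso
            refine no_middle hM (by rw [hL]; simp) ?_ ?_ hcom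
            · intro q hq
              rw [hL] at hq
              simp only [List.head?_cons, Option.mem_def, Option.some.injEq] at hq
              rw [← hq]
              exact hca
            · intro q hq
              rw [hlast] at hq
              cases hq
              exact hpa

lemma comm_pow_gen {a : A} {M : ℕ} (hM : 0 < M) {u : FreeGroup A}
    (h : Commute u (FreeGroup.of a ^ M)) : ∃ k : ℤ, u = FreeGroup.of a ^ k :=
  comm_pow_gen_aux hM u.toWord.length u le_rfl h

section Braid

variable {n : ℕ}

/-- `j`-th generator of the free group, as a function of a natural number. -/
def e (n j : ℕ) : FreeGroup (Fin n) := if h : j < n then FreeGroup.of ⟨j, h⟩ else 1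

/-- product of generators `e a * e (a+1) * ⋯ * e (a+k-1)`. -/
def W (n a k : ℕ) : FreeGroup (Fin n) := ((List.range' a k).map (e n)).prod

/-- `i`-th braid generator, as a function of a natural number. -/
def sg (n i : ℕ) : BraidGroup n := if h : i < n - 1 then braidGen ⟨i, h⟩ else 1

/-- product of braid generators `sg a * ⋯ * sg (a+k-1)`. -/
def D (n a k : ℕ) : BraidGroup n := ((List.range' a k).map (sg n)).prod

lemma W_zero (a : ℕ) : W n a 0 = 1 := rfl

lemma W_succ (a k : ℕ) : W n a (k + 1) = e n a * W n (a + 1) k := by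
  rw [W, List.range'_succ, List.map_cons, List.prod_cons]; rfl

lemma W_append (a k l : ℕ) : W n a (k + l) = W n a k * W n (a + k) l := by
  rw [W, ← List.range'_append_1 (s := a) (m := k) (n := l), List.map_append,
    List.prod_append]; rfl

lemma W_one (a : ℕ) : W n a 1 = e n a := by
  rw [W_succ, W_zero, mul_one]

lemma D_zero (a : ℕ) : D n a 0 = 1 := rfl

lemma D_succ (a k : ℕ) : D n a (k + 1) = sg n a * D n (a + 1) k := by
  rw [D, List.range'_succ, List.map_cons, List.prod_cons]; rfl

lemma D_append (a k l : ℕ) : D n a (k + l) = D n a k * D n (a + k) l := by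
  rw [D, ← List.range'_append_1 (s := a) (m := k) (n := l), List.map_append,
    List.prod_append]; rfl

lemma D_concat (a k : ℕ) : D n a (k + 1) = D n a k * sg n (a + k) := by
  rw [D_append, D_succ, D_zero, mul_one]

lemma fullWord_eq : fullWord n = W n 0 n := by
  rw [fullWord, W]
  congr 1
  apply List.ext_getElem
  · simp
  · intro i h1 h2
    simp only [List.getElem_ofFn, List.getElem_map, List.getElem_range']
    rw [e]
    simp only [List.length_ofFn] at h1
    rw [dif_pos (by omega : 0 + 1 * i < n)]
    exact congrArg FreeGroup.of (Fin.ext (by simp))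

lemma braidZ_eq : braidZ n = (D n 0 (n - 1)) ^ n := by
  rw [braidZ, D]
  congr 2
  apply List.ext_getElem
  · simp
  · intro i h1 h2
    simp only [List.getElem_ofFn, List.getElem_map, List.getElem_range']
    rw [sg]
    simp only [List.length_ofFn] at h1
    rw [dif_pos (by omega : 0 + 1 * i < n - 1)]
    exact congrArg braidGen (Fin.ext (by simp))

variable (α : BraidGroup n →* MulAut (FreeGroup (Fin n))) (hα : IsArtinRep α)

include hα

lemma art_eq {i : ℕ} (hi : i < n - 1) : α (sg n i) (e n i) = e n (i + 1) := by
  have h := hα ⟨i, hi⟩ ⟨i, by omega⟩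
  rw [if_pos rfl] at h
  rw [sg, dif_pos hi, e, e, dif_pos (by omega : i < n), dif_pos (by omega : i + 1 < n)]
  exact h

lemma art_succ {i : ℕ} (hi : i < n - 1) :
    α (sg n i) (e n (i + 1)) = (e n (i + 1))⁻¹ * e n i * e n (i + 1) := by
  have h := hα ⟨i, hi⟩ ⟨i + 1, by omega⟩
  rw [if_neg (by simp), if_pos rfl] at h
  rw [sg, dif_pos hi, e, e, dif_pos (by omega : i < n), dif_pos (by omega : i + 1 < n)]
  exact h

lemma art_other {i j : ℕ} (h1 : j ≠ i) (h2 : j ≠ i + 1) : α (sg n i) (e n j) = e n j := by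
  by_cases hi : i < n - 1
  · by_cases hj : j < n
    · have h := hα ⟨i, hi⟩ ⟨j, hj⟩
      rw [if_neg (by simpa using h1), if_neg (by simpa using h2)] at h
      rw [sg, dif_pos hi, e, dif_pos hj]
      exact h
    · rw [e, dif_neg hj]
      exact _root_.map_one (α (sg n i))
  · rw [sg, dif_neg hi, map_one, MulAut.one_apply]

lemma fix_W {i a k : ℕ} (h : ∀ m, a ≤ m → m < a + k → m ≠ i ∧ m ≠ i + 1) :
    α (sg n i) (W n a k) = W n a k := by
  induction k generalizing a with
  | zero => rw [W_zero, map_one]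
  | succ k ih =>
    rw [W_succ, map_mul, art_other α hα (h a le_rfl (by omega)).1 (h a le_rfl (by omega)).2,
      ih (fun m hm1 hm2 => h m (by omega) (by omega))]

lemma fix_w {i : ℕ} : α (sg n i) (W n 0 n) = W n 0 n := by
  by_cases hi : i < n - 1
  · have hd : W n 0 n = W n 0 (i + (2 + (n - i - 2))) := congrArg (W n 0) (by omega)
    rw [hd, W_append, W_append, zero_add]
    have hmid : W n i 2 = e n i * e n (i + 1) := by
      rw [show (2 : ℕ) = 1 + 1 from rfl, W_append, W_one, W_one]
    rw [hmid]
    rw [map_mul, map_mul, map_mul]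
    rw [fix_W α hα (fun m hm1 hm2 => ⟨by omega, by omega⟩)]
    rw [fix_W α hα (fun m hm1 hm2 => ⟨by omega, by omega⟩)]
    rw [art_eq α hα hi, art_succ α hα hi]
    group
  · rw [sg, dif_neg hi, map_one, MulAut.one_apply]

lemma all_fix_w (c : BraidGroup n) : α c (W n 0 n) = W n 0 n := by
  let K : Subgroup (BraidGroup n) :=
    { carrier := {c | α c (W n 0 n) = W n 0 n}
      one_mem' := by simp
      mul_mem' := by
        intro a b ha hb
        simp only [Set.mem_setOf_eq, map_mul, MulAut.mul_apply] at *
        rw [hb, ha]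
      inv_mem' := by
        intro a ha
        simp only [Set.mem_setOf_eq] at *
        calc α a⁻¹ (W n 0 n) = α a⁻¹ (α a (W n 0 n)) := by rw [ha]
        _ = α (a⁻¹ * a) (W n 0 n) := by rw [map_mul]; rfl
        _ = W n 0 n := by rw [inv_mul_cancel, map_one, MulAut.one_apply] }
  have hK : K = ⊤ := by
    rw [eq_top_iff, ← PresentedGroup.closure_range_of (braidRels (n - 1))]
    apply Subgroup.closure_le K |>.mpr
    rintro _ ⟨i, rfl⟩
    show α (PresentedGroup.of i) (W n 0 n) = W n 0 n
    have : (PresentedGroup.of i : BraidGroup n) = sg n i.val := by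
      rw [sg, dif_pos i.isLt]
      congr
    rw [this]
    exact fix_w α hα
  have : c ∈ K := by rw [hK]; trivial
  exact this

lemma fix_D {a k j : ℕ} (h : ∀ m, a ≤ m → m < a + k → j ≠ m ∧ j ≠ m + 1) :
    α (D n a k) (e n j) = e n j := by
  induction k generalizing a with
  | zero => rw [D_zero, map_one, MulAut.one_apply]
  | succ k ih =>
    rw [D_succ, map_mul, MulAut.mul_apply, ih (fun m hm1 hm2 => h m (by omega) (by omega)),
      art_other α hα (h a le_rfl (by omega)).1 (h a le_rfl (by omega)).2]

lemma phi_e_lt {j : ℕ} (hj : j < n - 1) : α (D n 0 (n - 1)) (e n j) = e n (j + 1) := by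
  rw [show D n 0 (n - 1) = D n 0 ((j + 1) + (n - 2 - j)) from congrArg (D n 0) (by omega),
    D_append, zero_add, _root_.map_mul, MulAut.mul_apply]
  rw [fix_D α hα (fun m hm1 hm2 => ⟨by omega, by omega⟩)]
  rw [D_concat, zero_add, map_mul, MulAut.mul_apply, art_eq α hα hj]
  rw [fix_D α hα (fun m hm1 hm2 => ⟨by omega, by omega⟩)]

lemma claim2 : ∀ m, 1 ≤ m → m ≤ n - 1 →
    α (D n (n - 1 - m) m) (e n (n - 1)) =
      (W n (n - m) m)⁻¹ * e n (n - 1 - m) * W n (n - m) m := by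
  intro m
  induction m with
  | zero => omega
  | succ m ih =>
    intro _ hm2
    by_cases hm : m = 0
    · subst hm
      rw [show (0:ℕ) + 1 = 1 from rfl]
      have hD : D n (n - 1 - 1) 1 = sg n (n - 2) := by
        rw [D_succ, D_zero, mul_one]
        exact congrArg (sg n) (by omega)
      rw [hD, W_one,
        show e n (n - 1 - 1) = e n (n - 2) from congrArg (e n) (by omega),
        show e n (n - 1) = e n ((n - 2) + 1) from congrArg (e n) (by omega),
        art_succ α hα (by omega)]
    · have hm1 : 1 ≤ m := by omega
      have hmn : m ≤ n - 1 := by omega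
      rw [show n - 1 - (m + 1) = n - 2 - m by omega]
      rw [D_succ, show n - 2 - m + 1 = n - 1 - m by omega]
      rw [_root_.map_mul, MulAut.mul_apply, ih hm1 hmn]
      rw [_root_.map_mul, _root_.map_mul, map_inv]
      rw [fix_W α hα (fun m' h1 h2 => ⟨by omega, by omega⟩)]
      rw [show n - 1 - m = (n - 2 - m) + 1 by omega, art_succ α hα (by omega)]
      rw [show n - (m + 1) = n - 1 - m by omega]
      rw [show W n (n - 1 - m) (m + 1) = e n (n - 1 - m) * W n (n - m) m by
        rw [W_succ, show n - 1 - m + 1 = n - m by omega]]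
      rw [show n - 1 - m = (n - 2 - m) + 1 by omega]
      group

lemma phi_e_last (hn : 3 ≤ n) :
    α (D n 0 (n - 1)) (e n (n - 1)) = (W n 1 (n - 1))⁻¹ * e n 0 * W n 1 (n - 1) := by
  have h := claim2 α hα (n - 1) (by omega) le_rfl
  rw [show n - 1 - (n - 1) = 0 by omega, show n - (n - 1) = 1 by omega] at h
  exact h

lemma phi_pow (hn : 3 ≤ n) :
    ∀ k, k ≤ n → ∀ j, j < n →
      ((α (D n 0 (n - 1))) ^ k) (e n j) =
        if j + k < n then e n (j + k)
        else (W n 0 n)⁻¹ * e n (j + k - n) * (W n 0 n) := by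
  have hw : α (D n 0 (n - 1)) (W n 0 n) = W n 0 n := all_fix_w α hα _
  have hwd : W n 0 n = e n 0 * W n 1 (n - 1) := by
    rw [show W n 0 n = W n 0 (1 + (n - 1)) from congrArg (W n 0) (by omega), W_append,
      W_one, zero_add]
  intro k
  induction k with
  | zero =>
    intro _ j hj
    rw [pow_zero, if_pos (by omega)]
    rfl
  | succ k ih =>
    intro hk1 j hj
    rw [pow_succ', MulAut.mul_apply, ih (by omega) j hj]
    by_cases h1 : j + k < n
    · rw [if_pos h1]
      by_cases h2 : j + k < n - 1
      · rw [phi_e_lt α hα h2, if_pos (by omega), show j + (k + 1) = j + k + 1 by omega]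
      · have h3 : j + k = n - 1 := by omega
        rw [h3, phi_e_last α hα hn, if_neg (by omega)]
        rw [show j + (k + 1) - n = 0 by omega, hwd]
        group
    · rw [if_neg h1, if_neg (by omega)]
      rw [_root_.map_mul, _root_.map_mul, map_inv, hw]
      have h4 : j + k - n < n - 1 := by omega
      rw [phi_e_lt α hα h4, show j + (k + 1) - n = j + k - n + 1 by omega]

lemma alpha_z (hn : 3 ≤ n) :
    α (braidZ n) = MulAut.conj (W n 0 n)⁻¹ := by
  have key : ∀ j : Fin n, α (braidZ n) (FreeGroup.of j)
      = MulAut.conj (W n 0 n)⁻¹ (FreeGroup.of j) := by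
    intro j
    have h1 : FreeGroup.of j = e n (j : ℕ) := by
      rw [e, dif_pos j.isLt]
    rw [braidZ_eq, _root_.map_pow, h1]
    rw [phi_pow α hα hn n le_rfl (j : ℕ) j.isLt]
    rw [if_neg (by omega), show (j : ℕ) + n - n = (j : ℕ) by omega]
    rw [MulAut.conj_apply, inv_inv]
  apply MulEquiv.toMonoidHom_injective
  apply FreeGroup.ext_hom
  intro a
  exact key a

lemma z_central (hinj : Function.Injective α) (hn : 3 ≤ n) (c : BraidGroup n) :
    c * braidZ n = braidZ n * c := by
  have h : α (c * braidZ n * c⁻¹) = α (braidZ n) := by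
    apply MulEquiv.ext
    intro y
    rw [_root_.map_mul, _root_.map_mul, MulAut.mul_apply, MulAut.mul_apply]
    rw [alpha_z α hα hn]
    rw [MulAut.conj_apply, MulAut.conj_apply]
    have : α c ((W n 0 n)⁻¹ * α c⁻¹ y * ((W n 0 n)⁻¹)⁻¹)
        = (α c (W n 0 n))⁻¹ * α c (α c⁻¹ y) * α c (W n 0 n) := by
      rw [_root_.map_mul, _root_.map_mul, map_inv, map_inv, inv_inv]
    rw [this, all_fix_w α hα c]
    have : α c (α c⁻¹ y) = y := by
      rw [← MulAut.mul_apply, ← _root_.map_mul, mul_inv_cancel, _root_.map_one,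
        MulAut.one_apply]
    rw [this, inv_inv]
  have h2 := hinj h
  calc c * braidZ n = c * braidZ n * c⁻¹ * c := by group
  _ = braidZ n * c := by rw [h2]

lemma comm_w_imp (hn : 3 ≤ n) {u : FreeGroup (Fin n)}
    (h : u * W n 0 n = W n 0 n * u) : ∃ k : ℤ, u = (W n 0 n) ^ k := by
  have h0n : (0 : ℕ) < n := by omega
  set a0 : Fin n := ⟨0, h0n⟩ with ha0
  have he0 : e n 0 = FreeGroup.of a0 := by rw [e, dif_pos h0n]
  -- ψ kills the tail of w, χ restores it
  set ψ : FreeGroup (Fin n) →* FreeGroup (Fin n) :=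
    FreeGroup.lift (fun j : Fin n =>
      if (j : ℕ) = 0 then FreeGroup.of j * (W n 1 (n - 1))⁻¹ else FreeGroup.of j) with hψ
  set χ : FreeGroup (Fin n) →* FreeGroup (Fin n) :=
    FreeGroup.lift (fun j : Fin n =>
      if (j : ℕ) = 0 then W n 0 n else FreeGroup.of j) with hχ
  have hwd : W n 0 n = e n 0 * W n 1 (n - 1) := by
    rw [show W n 0 n = W n 0 (1 + (n - 1)) from congrArg (W n 0) (by omega), W_append,
      W_one, zero_add]
  have hfixe : ∀ f : FreeGroup (Fin n) →* FreeGroup (Fin n),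
      (∀ m, 1 ≤ m → m < n → f (e n m) = e n m) →
      ∀ a k, 1 ≤ a → f (W n a k) = W n a k := by
    intro f hf a k
    induction k generalizing a with
    | zero => intro _; rw [W_zero, _root_.map_one]
    | succ k ih =>
      intro ha
      rw [W_succ, _root_.map_mul, ih (a + 1) (by omega)]
      by_cases ham : a < n
      · rw [hf a ha ham]
      · rw [e, dif_neg ham, _root_.map_one]
  have hψe : ∀ m, 1 ≤ m → m < n → ψ (e n m) = e n m := by
    intro m h1 h2
    rw [e, dif_pos h2, hψ, FreeGroup.lift_apply_of, if_neg (by simpa using by omega : ¬((⟨m, h2⟩ : Fin n) : ℕ) = 0)]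
  have hχe : ∀ m, 1 ≤ m → m < n → χ (e n m) = e n m := by
    intro m h1 h2
    rw [e, dif_pos h2, hχ, FreeGroup.lift_apply_of, if_neg (by simpa using by omega : ¬((⟨m, h2⟩ : Fin n) : ℕ) = 0)]
  have hψw : ψ (W n 0 n) = FreeGroup.of a0 := by
    rw [hwd, _root_.map_mul, hfixe ψ hψe 1 (n - 1) le_rfl, he0, hψ, FreeGroup.lift_apply_of,
      if_pos rfl]
    group
  have hχψ : ∀ v, χ (ψ v) = v := by
    intro v
    have : χ.comp ψ = MonoidHom.id _ := by
      apply FreeGroup.ext_hom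
      intro a
      simp only [MonoidHom.comp_apply, MonoidHom.id_apply]
      by_cases ha : (a : ℕ) = 0
      · rw [hψ, FreeGroup.lift_apply_of, if_pos ha, _root_.map_mul, map_inv]
        rw [hχ, FreeGroup.lift_apply_of, if_pos ha]
        rw [hfixe χ hχe 1 (n - 1) le_rfl, hwd]
        have : e n 0 = FreeGroup.of a := by
          rw [e, dif_pos h0n]
          exact congrArg FreeGroup.of (Fin.ext (by simp [ha]))
        rw [this]
        group
      · rw [hψ, FreeGroup.lift_apply_of, if_neg ha, hχ, FreeGroup.lift_apply_of, if_neg ha]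
    calc χ (ψ v) = (χ.comp ψ) v := rfl
    _ = v := by rw [this]; rfl
  have hχ0 : χ (FreeGroup.of a0) = W n 0 n := by
    rw [hχ, FreeGroup.lift_apply_of, if_pos rfl]
  -- transfer the commutation
  have hcomm : ψ u * FreeGroup.of a0 = FreeGroup.of a0 * ψ u := by
    have := congrArg ψ h
    rw [_root_.map_mul, _root_.map_mul, hψw] at this
    exact this
  obtain ⟨k, hk⟩ := comm_pow_gen (by omega : 0 < 1)
    (by rw [pow_one]; exact hcomm : Commute (ψ u) (FreeGroup.of a0 ^ 1))
  refine ⟨k, ?_⟩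
  have := congrArg χ hk
  rw [hχψ, map_zpow, hχ0] at this
  exact this

end Braid

section Final

variable {n : ℕ} (α : BraidGroup n →* MulAut (FreeGroup (Fin n))) (hα : IsArtinRep α)

lemma mk_eq (g : FreeGroup (Fin n) ⋊[α] BraidGroup n) :
    SemidirectProduct.inl g.left * SemidirectProduct.inr g.right = g := by
  ext <;> simp

lemma g0_mk : (SemidirectProduct.inl (fullWord n) * SemidirectProduct.inr (braidZ n) :
    FreeGroup (Fin n) ⋊[α] BraidGroup n) = ⟨fullWord n, braidZ n⟩ := by
  ext <;> simp

lemma conj_formula (g : FreeGroup (Fin n) ⋊[α] BraidGroup n) (x : FreeGroup (Fin n)) :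
    SemidirectProduct.inl x * g * (SemidirectProduct.inl x)⁻¹
      = ⟨x * g.left * (α g.right x)⁻¹, g.right⟩ := by
  ext
  · simp [_root_.map_inv, mul_assoc]
  · simp

include hα

lemma g0_commute (hn : 3 ≤ n) :
    (SemidirectProduct.inr (braidZ n) : FreeGroup (Fin n) ⋊[α] BraidGroup n)
        * SemidirectProduct.inl (fullWord n)
      = SemidirectProduct.inl (fullWord n) * SemidirectProduct.inr (braidZ n) := by
  ext <;> simp
  rw [fullWord_eq, alpha_z α hα hn, MulAut.conj_apply]
  group

lemma g0_pow (hn : 3 ≤ n) (k : ℤ) :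
    ((SemidirectProduct.inl (fullWord n) * SemidirectProduct.inr (braidZ n) :
        FreeGroup (Fin n) ⋊[α] BraidGroup n)) ^ k
      = SemidirectProduct.inl (fullWord n ^ k) * SemidirectProduct.inr (braidZ n ^ k) := by
  have hc : Commute (SemidirectProduct.inl (fullWord n) :
      FreeGroup (Fin n) ⋊[α] BraidGroup n) (SemidirectProduct.inr (braidZ n)) :=
    (g0_commute α hα hn).symm
  rw [hc.mul_zpow, ← _root_.map_zpow, ← _root_.map_zpow]

lemma g0_central (hinj : Function.Injective α) (hn : 3 ≤ n) :
    (SemidirectProduct.inl (fullWord n) * SemidirectProduct.inr (braidZ n) :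
        FreeGroup (Fin n) ⋊[α] BraidGroup n) ∈ Subgroup.center _ := by
  rw [Subgroup.mem_center_iff]
  intro h
  rw [g0_mk]
  ext
  · simp only [SemidirectProduct.mul_left]
    show h.left * α h.right (fullWord n) = fullWord n * α (braidZ n) h.left
    rw [fullWord_eq, all_fix_w α hα h.right, alpha_z α hα hn, MulAut.conj_apply]
    group
  · simp only [SemidirectProduct.mul_right]
    show h.right * braidZ n = braidZ n * h.right
    exact z_central α hα hinj hn h.right

lemma key_mem (hinj : Function.Injective α) (hn : 3 ≤ n)
    (g : FreeGroup (Fin n) ⋊[α] BraidGroup n)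
    (hb : ∀ y, α g.right y = g.left⁻¹ * y * g.left) :
    g ∈ Subgroup.zpowers
      (SemidirectProduct.inl (fullWord n) * SemidirectProduct.inr (braidZ n)) := by
  have hwfix : α g.right (W n 0 n) = W n 0 n := all_fix_w α hα g.right
  have hcw : g.left * W n 0 n = W n 0 n * g.left := by
    have h2 := hb (W n 0 n)
    rw [hwfix] at h2
    calc g.left * W n 0 n = g.left * (g.left⁻¹ * W n 0 n * g.left) := by rw [← h2]
    _ = W n 0 n * g.left := by group
  obtain ⟨k, hk⟩ := comm_w_imp α hα hn hcw
  have hzk : α g.right = α (braidZ n ^ k) := by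
    rw [_root_.map_zpow, alpha_z α hα hn, ← _root_.map_zpow MulAut.conj, inv_zpow]
    apply MulEquiv.ext
    intro y
    rw [hb y, hk, MulAut.conj_apply, inv_inv]
  have hbk : g.right = braidZ n ^ k := hinj hzk
  rw [Subgroup.mem_zpowers_iff]
  refine ⟨k, ?_⟩
  rw [g0_pow α hα hn k, show fullWord n ^ k = g.left by rw [fullWord_eq, ← hk], ← hbk]
  exact mk_eq α g

lemma center_eq (hinj : Function.Injective α) (hn : 3 ≤ n) :
    Subgroup.center (FreeGroup (Fin n) ⋊[α] BraidGroup n) =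
      Subgroup.zpowers
        (SemidirectProduct.inl (fullWord n) * SemidirectProduct.inr (braidZ n)) := by
  apply _root_.le_antisymm
  · intro g hg
    apply key_mem α hα hinj hn g
    intro y
    have h1 := Subgroup.mem_center_iff.mp hg (SemidirectProduct.inl y)
    have h2 := congrArg SemidirectProduct.left h1
    simp only [SemidirectProduct.mul_left, SemidirectProduct.left_inl,
      SemidirectProduct.right_inl, _root_.map_one, MulAut.one_apply] at h2
    calc (α g.right) y = g.left⁻¹ * (g.left * (α g.right) y) := by group
    _ = g.left⁻¹ * (y * g.left) := by rw [← h2]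
    _ = g.left⁻¹ * y * g.left := by group
  · rw [Subgroup.zpowers_le]
    exact g0_central α hα hinj hn

lemma finite_orbit_imp (hinj : Function.Injective α) (hn : 3 ≤ n)
    (g : FreeGroup (Fin n) ⋊[α] BraidGroup n)
    (hf : {g' | ∃ x : FreeGroup (Fin n),
        SemidirectProduct.inl x * g * (SemidirectProduct.inl x)⁻¹ = g'}.Finite) :
    g ∈ Subgroup.center (FreeGroup (Fin n) ⋊[α] BraidGroup n) := by
  classical
  set u := g.left with hu
  set b := g.right with hbdef
  set S := {g' | ∃ x : FreeGroup (Fin n),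
      SemidirectProduct.inl x * g * (SemidirectProduct.inl x)⁻¹ = g'} with hS
  haveI : Finite S := hf.to_subtype
  set H : Subgroup (FreeGroup (Fin n)) :=
    MonoidHom.eqLocus ((α b) : FreeGroup (Fin n) →* FreeGroup (Fin n))
      ((MulAut.conj u⁻¹ : MulAut (FreeGroup (Fin n))) :
        FreeGroup (Fin n) →* FreeGroup (Fin n)) with hH
  have memH : ∀ t : FreeGroup (Fin n), t ∈ H ↔ α b t = u⁻¹ * t * u := by
    intro t
    constructor
    · intro ht
      have h1 : α b t = MulAut.conj u⁻¹ t := ht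
      rw [h1, MulAut.conj_apply, inv_inv]
    · intro ht
      show α b t = MulAut.conj u⁻¹ t
      rw [MulAut.conj_apply, inv_inv, ht]
  -- the conjugate map induces an injection of F/H into S
  have hiff : ∀ x y : FreeGroup (Fin n),
      (x * u * (α b x)⁻¹ = y * u * (α b y)⁻¹) ↔ x⁻¹ * y ∈ H := by
    intro x y
    rw [memH]
    constructor
    · intro hE
      have h1 : (α b x)⁻¹ = u⁻¹ * x⁻¹ * (y * u * (α b y)⁻¹) := by
        rw [← hE]; group
      rw [_root_.map_mul, _root_.map_inv, h1]
      group
    · intro hH2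
      have h2 : (α b x)⁻¹ * α b y = u⁻¹ * x⁻¹ * y * u := by
        rw [← _root_.map_inv, ← _root_.map_mul]
        rw [show x⁻¹ * y = x⁻¹ * y from rfl] at hH2
        rw [hH2]
        group
      have h3 : (α b x)⁻¹ = u⁻¹ * x⁻¹ * y * u * (α b y)⁻¹ := by
        rw [← h2]; group
      rw [h3]
      group
  set fbar : FreeGroup (Fin n) → S := fun x =>
    ⟨⟨x * u * (α b x)⁻¹, b⟩, ⟨x, by rw [conj_formula α]⟩⟩ with hfbar
  have fbar_eq : ∀ x y, fbar x = fbar y ↔ x * u * (α b x)⁻¹ = y * u * (α b y)⁻¹ := by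
    intro x y
    rw [Subtype.ext_iff]
    constructor
    · intro hxy
      exact congrArg SemidirectProduct.left hxy
    · intro hxy
      show (⟨_, b⟩ : FreeGroup (Fin n) ⋊[α] BraidGroup n) = ⟨_, b⟩
      rw [hxy]
  have hq : Function.Injective (Quotient.lift fbar
      (fun x y hxy => (fbar_eq x y).mpr ((hiff x y).mpr
        (QuotientGroup.leftRel_apply.mp hxy))) : FreeGroup (Fin n) ⧸ H → S) := by
    intro c d
    refine Quotient.inductionOn₂ c d ?_
    intro x y hxy
    exact Quotient.sound (QuotientGroup.leftRel_apply.mpr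
      ((hiff x y).mp ((fbar_eq x y).mp hxy)))
  haveI : Finite (FreeGroup (Fin n) ⧸ H) := Finite.of_injective _ hq
  haveI : H.FiniteIndex := Subgroup.finiteIndex_of_finite_quotient
  set N := H.normalCore with hN
  haveI : N.FiniteIndex := Subgroup.finiteIndex_normalCore H
  have hM : 0 < N.index := Nat.pos_of_ne_zero Subgroup.FiniteIndex.index_ne_zero
  have hNmem : ∀ t ∈ N, α b t = u⁻¹ * t * u := by
    intro t ht
    exact (memH t).mp (H.normalCore_le ht)
  -- γ := conj_u ∘ α b is the identity
  have claim : ∀ x, u * α b x * u⁻¹ = x := by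
    intro x
    set c := x⁻¹ * (u * α b x * u⁻¹) with hc
    have hcomm : ∀ h ∈ N, c * h = h * c := by
      intro h hmem
      set d := u * α b x * u⁻¹ with hd
      have h1 : u * α b (x * h * x⁻¹) * u⁻¹ = x * h * x⁻¹ := by
        rw [hNmem _ (Subgroup.Normal.conj_mem inferInstance h hmem x)]
        group
      have h2 : u * α b (x * h * x⁻¹) * u⁻¹ = d * h * d⁻¹ := by
        rw [_root_.map_mul, _root_.map_mul, _root_.map_inv, hNmem h hmem, hd]
        group
      have h3 : d * h * d⁻¹ = x * h * x⁻¹ := by rw [← h2, h1]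
      have hch : c * h * c⁻¹ = h := by
        rw [hc]
        calc x⁻¹ * d * h * (x⁻¹ * d)⁻¹ = x⁻¹ * (d * h * d⁻¹) * x := by group
        _ = x⁻¹ * (x * h * x⁻¹) * x := by rw [h3]
        _ = h := by group
      calc c * h = (c * h * c⁻¹) * c := by group
      _ = h * c := by rw [hch]
    have h0 : (0 : ℕ) < n := by omega
    have h1 : (1 : ℕ) < n := by omega
    obtain ⟨k0, hk0⟩ := comm_pow_gen hM
      (show Commute c (FreeGroup.of (⟨0, h0⟩ : Fin n) ^ N.index) from
        hcomm _ (Subgroup.pow_index_mem N _))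
    obtain ⟨k1, hk1⟩ := comm_pow_gen hM
      (show Commute c (FreeGroup.of (⟨1, h1⟩ : Fin n) ^ N.index) from
        hcomm _ (Subgroup.pow_index_mem N _))
    set E : FreeGroup (Fin n) →* Multiplicative ℤ :=
      FreeGroup.lift (fun j => if j = (⟨0, h0⟩ : Fin n) then Multiplicative.ofAdd (1 : ℤ)
        else 1) with hE
    have hE0 : E (FreeGroup.of (⟨0, h0⟩ : Fin n)) = Multiplicative.ofAdd (1 : ℤ) := by
      rw [hE, FreeGroup.lift_apply_of, if_pos rfl]
    have hE1 : E (FreeGroup.of (⟨1, h1⟩ : Fin n)) = 1 := by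
      rw [hE, FreeGroup.lift_apply_of, if_neg (by simp)]
    have e0 := congrArg E hk0
    have e1 := congrArg E hk1
    rw [hk1] at e0
    rw [map_zpow, map_zpow, hE0, hE1, one_zpow] at e0
    have hk00 : k0 = 0 := by
      have h5 := congrArg Multiplicative.toAdd e0.symm
      rw [toAdd_zpow, toAdd_ofAdd, toAdd_one, smul_eq_mul, mul_one] at h5
      exact h5
    rw [hk00, zpow_zero] at hk0
    have : u * α b x * u⁻¹ = x * c := by rw [hc]; group
    rw [this, hk0, mul_one]
  have hb : ∀ y, α g.right y = g.left⁻¹ * y * g.left := by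
    intro y
    have := claim y
    calc α g.right y = u⁻¹ * (u * α b y * u⁻¹) * u := by rw [hbdef, hu]; group
    _ = g.left⁻¹ * y * g.left := by rw [this, hu]
  rw [center_eq α hα hinj hn]
  exact key_mem α hα hinj hn g hb

end Final

end BraidCenterProof

theorem finite_free_conjugates_iff_center (n : ℕ) (hn : 3 ≤ n)
    (α : BraidGroup n →* MulAut (FreeGroup (Fin n))) (hα : IsArtinRep α)
    (hinj : Function.Injective α) :
    Subgroup.center (FreeGroup (Fin n) ⋊[α] BraidGroup n) =
        Subgroup.zpowers
          (SemidirectProduct.inl (fullWord n) * SemidirectProduct.inr (braidZ n)) ∧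
      ∀ g : FreeGroup (Fin n) ⋊[α] BraidGroup n,
        ({g' | ∃ x : FreeGroup (Fin n),
            SemidirectProduct.inl x * g * (SemidirectProduct.inl x)⁻¹ = g'}.Finite ↔
          g ∈ Subgroup.center (FreeGroup (Fin n) ⋊[α] BraidGroup n)) := by
  constructor
  · exact BraidCenterProof.center_eq α hα hinj hn
  · intro g
    constructor
    · exact BraidCenterProof.finite_orbit_imp α hα hinj hn g
    · intro hg
      apply Set.Finite.subset (Set.finite_singleton g)
      rintro g' ⟨x, rfl⟩
      have h1 := Subgroup.mem_center_iff.mp hg (SemidirectProduct.inl x)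
      simp only [Set.mem_singleton_iff]
      rw [h1]
      group
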